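/- There is a group homomorphism Φ from stab(π) to Equiv.Perm (Fin n) uniquely determined by c (σ x) = Φ(σ) (c x) for all σ ∈ stab(π) and x ∈ β; its kernel is fix(π) and its range is exactly Perm(π). Consequently the quotient group stab(π) / fix(π) is isomorphic to Perm(π) (paper eq. (permpi)). -/

import Mathlib

/-- Paper eq. (permpi): there is a group homomorphism `Φ : stab(π) →* Equiv.Perm (Fin n)`
uniquely determined by `c (σ x) = Φ σ (c x)`; its kernel is `fix(π)`, its range is
`Perm(π)` (permutations of equivalent cells), and hence `stab(π)/fix(π) ≅ Perm(π)`. -/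
theorem stab_quotient_fix_iso_permPi
    (β : Type*) [Fintype β] (s : Setoid β) (n : ℕ) (c : β → Fin n)
    (hc : Function.Surjective c)
    (stabπ fixπ : Subgroup (Equiv.Perm β))
    (hstab : ∀ σ : Equiv.Perm β, σ ∈ stabπ ↔
      ((∀ x, s.r (σ x) x) ∧ ∀ x y, (c x = c y ↔ c (σ x) = c (σ y))))
    (hfix : ∀ σ : Equiv.Perm β, σ ∈ fixπ ↔
      ((∀ x, s.r (σ x) x) ∧ ∀ x, c (σ x) = c x))
    (Permπ : Subgroup (Equiv.Perm (Fin n)))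
    (hPerm : ∀ τ : Equiv.Perm (Fin n), τ ∈ Permπ ↔
      ∀ (i : Fin n) (x : β),
        Nat.card {y : β | c y = i ∧ s.r y x} =
          Nat.card {y : β | c y = τ i ∧ s.r y x}) :
    ∃ Φ : ↥stabπ →* Equiv.Perm (Fin n),
      (∀ (σ : ↥stabπ) (x : β), c ((σ : Equiv.Perm β) x) = Φ σ (c x)) ∧
      (∀ Φ' : ↥stabπ →* Equiv.Perm (Fin n),
        (∀ (σ : ↥stabπ) (x : β), c ((σ : Equiv.Perm β) x) = Φ' σ (c x)) → Φ' = Φ) ∧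
      Φ.ker = fixπ.subgroupOf stabπ ∧
      Φ.range = Permπ ∧
      Nonempty ((↥stabπ ⧸ Φ.ker) ≃* ↥Permπ) := by
  classical
  letI := s
  have hstab2 : ∀ σ : stabπ, ∀ x y : β, c x = c y → c (σ.1 x) = c (σ.1 y) :=
    fun σ x y h => (((hstab σ.1).mp σ.2).2 x y).mp h
  set u : Fin n → β := Function.surjInv hc with hu
  have hcu : ∀ i, c (u i) = i := fun i => Function.surjInv_eq hc i
  let f : stabπ → Fin n → Fin n := fun σ i => c (σ.1 (u i))
  have keyf : ∀ (σ : stabπ) (x : β), f σ (c x) = c (σ.1 x) := fun σ x =>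
    hstab2 σ _ x (hcu (c x))
  have fcomp : ∀ σ τ : stabπ, ∀ i, f (σ * τ) i = f σ (f τ i) := by
    intro σ τ i
    show c ((σ.1) (τ.1 (u i))) = f σ (c (τ.1 (u i)))
    rw [keyf]
  have finv : ∀ σ : stabπ, Function.LeftInverse (f σ⁻¹) (f σ) := by
    intro σ i
    rw [← fcomp σ⁻¹ σ i, inv_mul_cancel]
    exact hcu i
  let Φe : stabπ → Equiv.Perm (Fin n) := fun σ =>
    ⟨f σ, f σ⁻¹, finv σ, by have h := finv σ⁻¹; simp only [inv_inv] at h; exact h⟩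
  let Φ : stabπ →* Equiv.Perm (Fin n) :=
    { toFun := Φe
      map_one' := Equiv.ext fun i => hcu i
      map_mul' := fun σ τ => Equiv.ext fun i => fcomp σ τ i }
  have hΦapp : ∀ (σ : stabπ) (i : Fin n), Φ σ i = f σ i := fun _ _ => rfl
  have hΦ : ∀ (σ : stabπ) (x : β), c (σ.1 x) = Φ σ (c x) := fun σ x => (keyf σ x).symm
  have huniq : ∀ Φ' : ↥stabπ →* Equiv.Perm (Fin n),
      (∀ (σ : ↥stabπ) (x : β), c ((σ : Equiv.Perm β) x) = Φ' σ (c x)) → Φ' = Φ := by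
    intro Φ' h
    refine MonoidHom.ext fun σ => Equiv.ext fun i => ?_
    rw [show i = c (u i) from (hcu i).symm, ← h σ (u i)]
    exact hΦ σ (u i)
  have hker : Φ.ker = fixπ.subgroupOf stabπ := by
    ext σ
    rw [MonoidHom.mem_ker, Subgroup.mem_subgroupOf, hfix]
    constructor
    · intro h
      refine ⟨((hstab σ.1).mp σ.2).1, fun x => ?_⟩
      rw [hΦ σ x, h]; rfl
    · intro h
      refine Equiv.ext fun i => ?_
      rw [hΦapp]
      show c (σ.1 (u i)) = i
      rw [h.2, hcu]
  have hrange : Φ.range = Permπ := by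
    ext τ
    rw [MonoidHom.mem_range, hPerm]
    constructor
    · rintro ⟨σ, rfl⟩ i x
      have hσ1 := ((hstab σ.1).mp σ.2).1
      refine Nat.card_congr (Equiv.subtypeEquiv σ.1 fun y => ?_)
      constructor
      · rintro ⟨h1, h2⟩
        refine ⟨?_, s.trans' (hσ1 y) h2⟩
        rw [← h1]
        exact hΦ σ y
      · rintro ⟨h1, h2⟩
        refine ⟨(Φ σ).injective ?_, s.trans' (s.symm' (hσ1 y)) h2⟩
        rw [hΦ σ y] at h1
        exact h1
    · intro hτ
      -- construct a permutation of β realizing τ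
      set T : Fin n × Quotient s → Type _ :=
        fun p => {y : β // c y = p.1 ∧ ⟦y⟧ = p.2} with hT
      have hcard : ∀ p : Fin n × Quotient s, Nat.card (T p) = Nat.card (T (τ p.1, p.2)) := by
        rintro ⟨i, q⟩
        obtain ⟨x, rfl⟩ := Quotient.exists_rep q
        have h1 : ∀ j : Fin n,
            Nat.card {y : β | c y = j ∧ s.r y x} = Nat.card (T (j, ⟦x⟧)) := by
          intro j
          refine Nat.card_congr (Equiv.subtypeEquivRight fun y => ?_)
          exact and_congr_right fun _ => ⟨Quotient.sound, Quotient.exact⟩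
        rw [← h1 i, ← h1 (τ i)]
        exact hτ i x
      have hfin : ∀ p, Finite (T p) := fun p => Subtype.finite
      have e : ∀ p : Fin n × Quotient s, T p ≃ T (τ p.1, p.2) := fun p =>
        (Finite.card_eq.mp (hcard p)).some
      let toSigma : β ≃ Σ p : Fin n × Quotient s, T p :=
        { toFun := fun y => ⟨(c y, ⟦y⟧), y, rfl, rfl⟩
          invFun := fun z => z.2.1
          left_inv := fun y => rfl
          right_inv := by
            rintro ⟨⟨i, q⟩, y, h1, h2⟩
            dsimp only at h1 h2
            subst h1; subst h2; rfl }
      let base : (Fin n × Quotient s) ≃ (Fin n × Quotient s) := τ.prodCongr (Equiv.refl _)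
      let σ0 : Equiv.Perm β := toSigma.trans ((Equiv.sigmaCongr base e).trans toSigma.symm)
      have hσ0 : ∀ y : β, c (σ0 y) = τ (c y) ∧ Quotient.mk s (σ0 y) = Quotient.mk s y := by
        intro y
        have : σ0 y = (e (c y, ⟦y⟧) ⟨y, rfl, rfl⟩).1 := rfl
        rw [this]
        exact (e (c y, ⟦y⟧) ⟨y, rfl, rfl⟩).2
      have hmem : σ0 ∈ stabπ := by
        rw [hstab]
        refine ⟨fun x => Quotient.exact (hσ0 x).2, fun x y => ?_⟩
        rw [(hσ0 x).1, (hσ0 y).1]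
        exact (EmbeddingLike.apply_eq_iff_eq τ).symm
      refine ⟨⟨σ0, hmem⟩, Equiv.ext fun i => ?_⟩
      rw [hΦapp]
      show c (σ0 (u i)) = τ i
      rw [(hσ0 (u i)).1, hcu]
  exact ⟨Φ, hΦ, huniq, hker, hrange,
    ⟨(QuotientGroup.quotientKerEquivRange Φ).trans (MulEquiv.subgroupCongr hrange)⟩⟩
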